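/- Let F = {a ∈ α : for all k, f(k) = f(a) implies k = a} be the set of points lying in singleton fibres of f. Then the subgroup of Perm(α) generated by the set of transpositions t such that every transposition s ∈ P satisfies s·t = t·s and s ≠ t equals the subgroup {σ ∈ Perm(α) : σ(a) = a for every a ∉ F}, the full symmetric group on the fixed points of P. -/

import Mathlib

/-- The Young-type subgroup of `Equiv.Perm α` associated to `f : α → ι`: the permutations
preserving every fibre of `f` (the pointwise stabilizer of the fibre partition of `f`). -/
def youngSubgroup {α ι : Type*} (f : α → ι) : Subgroup (Equiv.Perm α) where
  carrier := {σ | ∀ a : α, f (σ a) = f a}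
  one_mem' := fun _ => rfl
  mul_mem' := fun {σ τ} hσ hτ a => (hσ (τ a)).trans (hτ a)
  inv_mem' := fun {σ} hσ a => by
    have h := hσ (σ⁻¹ a)
    rw [show σ (σ⁻¹ a) = a from σ.apply_symm_apply a] at h
    exact h.symm

/-- The subgroup of permutations of `α` supported on a set `F`: those fixing every point
outside `F`; for `F` the set of fixed points of the Young subgroup `P`, this is the full
symmetric group on the fixed points of `P`. -/
def fullPermOn {α : Type*} (F : Set α) : Subgroup (Equiv.Perm α) where
  carrier := {σ | ∀ a ∉ F, σ a = a}
  one_mem' := fun _ _ => rfl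
  mul_mem' := fun {σ τ} hσ hτ a ha => by
    have h : (σ * τ) a = σ (τ a) := rfl
    rw [h, hτ a ha, hσ a ha]
  inv_mem' := fun {σ} hσ a ha => by
    conv_lhs => rw [← hσ a ha]
    exact σ.symm_apply_apply a

/-- The subgroup generated by the transpositions orthogonal to every transposition of the
Young subgroup `P` is the full symmetric group on the points in singleton fibres of `f`. -/
theorem closure_perp_swaps_eq_fullPermOn_singleton_fibres
    {α ι : Type*} [DecidableEq α] [DecidableEq ι] [Fintype α] (f : α → ι) :
    Subgroup.closure {t : Equiv.Perm α | t.IsSwap ∧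
        ∀ s ∈ youngSubgroup f, s.IsSwap → s * t = t * s ∧ s ≠ t}
      = fullPermOn {a : α | ∀ k, f k = f a → k = a} := by
  set F : Set α := {a | ∀ k, f k = f a → k = a} with hF
  have hyoung : ∀ σ : Equiv.Perm α, σ ∈ youngSubgroup f ↔ ∀ a, f (σ a) = f a :=
    fun σ => Iff.rfl
  have hfull : ∀ σ : Equiv.Perm α, σ ∈ fullPermOn F ↔ ∀ a ∉ F, σ a = a :=
    fun σ => Iff.rfl
  -- key: a generator swap has both its points in F
  have hgenF : ∀ x y : α, x ≠ y →
      (∀ s ∈ youngSubgroup f, s.IsSwap → s * Equiv.swap x y = Equiv.swap x y * s ∧ s ≠ Equiv.swap x y) →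
      x ∈ F := by
    intro x y hxy ht k hk
    by_contra hkx
    rcases eq_or_ne k y with rfl | hky
    · -- then swap x y itself is in the Young subgroup
      have hs : Equiv.swap x k ∈ youngSubgroup f := by
        rw [hyoung]
        intro a
        rcases eq_or_ne a x with rfl | hax
        · rw [Equiv.swap_apply_left]; exact hk
        rcases eq_or_ne a k with rfl | hak
        · rw [Equiv.swap_apply_right]; exact hk.symm
        · rw [Equiv.swap_apply_of_ne_of_ne hax hak]
      exact (ht _ hs ⟨x, k, (Ne.symm hkx), rfl⟩).2 rfl
    · have hs : Equiv.swap x k ∈ youngSubgroup f := by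
        rw [hyoung]
        intro a
        rcases eq_or_ne a x with rfl | hax
        · rw [Equiv.swap_apply_left]; exact hk
        rcases eq_or_ne a k with rfl | hak
        · rw [Equiv.swap_apply_right]; exact hk.symm
        · rw [Equiv.swap_apply_of_ne_of_ne hax hak]
      have hcomm := (ht _ hs ⟨x, k, (Ne.symm hkx), rfl⟩).1
      have := congrArg (fun g : Equiv.Perm α => g y) hcomm
      simp only [Equiv.Perm.mul_apply] at this
      rw [Equiv.swap_apply_right, Equiv.swap_apply_left,
        Equiv.swap_apply_of_ne_of_ne (Ne.symm hxy) (Ne.symm hky),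
        Equiv.swap_apply_right] at this
      exact hkx this
  apply le_antisymm
  · rw [Subgroup.closure_le]
    rintro t ⟨⟨x, y, hxy, rfl⟩, ht⟩
    have hxF : x ∈ F := hgenF x y hxy ht
    have hyF : y ∈ F := by
      have ht' : ∀ s ∈ youngSubgroup f, s.IsSwap →
          s * Equiv.swap y x = Equiv.swap y x * s ∧ s ≠ Equiv.swap y x := by
        rw [Equiv.swap_comm y x]; exact ht
      exact hgenF y x (Ne.symm hxy) ht'
    show Equiv.swap x y ∈ (fullPermOn F : Set (Equiv.Perm α))
    intro a ha
    exact Equiv.swap_apply_of_ne_of_ne (fun h => ha (h ▸ hxF)) (fun h => ha (h ▸ hyF))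
  · have key : ∀ n : ℕ, ∀ σ : Equiv.Perm α, (∀ a ∉ F, σ a = a) → σ.support.card = n →
        σ ∈ Subgroup.closure {t : Equiv.Perm α | t.IsSwap ∧
          ∀ s ∈ youngSubgroup f, s.IsSwap → s * t = t * s ∧ s ≠ t} := by
      intro n
      induction n using Nat.strong_induction_on with
      | _ n ih =>
      intro σ hσ' hn
      rcases eq_or_ne σ 1 with rfl | hσ1
      · exact Subgroup.one_mem _
      · obtain ⟨x, hx⟩ := Finset.nonempty_of_ne_empty
          (fun h => hσ1 (Equiv.Perm.support_eq_empty_iff.mp h))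
        have hx' : σ x ≠ x := Equiv.Perm.mem_support.mp hx
        have hxF : x ∈ F := by
          by_contra h; exact hx' (hσ' x h)
        have hσxF : σ x ∈ F := by
          by_contra h
          exact hx' (σ.injective (hσ' (σ x) h))
        -- swap x (σ x) is a generator
        have hswap_gen : Equiv.swap x (σ x) ∈ {t : Equiv.Perm α | t.IsSwap ∧
            ∀ s ∈ youngSubgroup f, s.IsSwap → s * t = t * s ∧ s ≠ t} := by
          refine ⟨⟨x, σ x, Ne.symm hx', rfl⟩, ?_⟩
          rintro s hs ⟨a, b, hab, rfl⟩
          have hfab : f b = f a := by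
            have := (hyoung _).mp hs a
            rwa [Equiv.swap_apply_left] at this
          have haF : a ∉ F := fun h => hab (h b hfab).symm
          have hbF : b ∉ F := fun h => hab (h a hfab.symm)
          have hdisj : (Equiv.swap a b).Disjoint (Equiv.swap x (σ x)) := by
            intro z
            by_cases hz : z = a ∨ z = b
            · right
              refine Equiv.swap_apply_of_ne_of_ne ?_ ?_ <;>
                rintro rfl <;> rcases hz with rfl | rfl
              · exact haF hxF
              · exact hbF hxF
              · exact haF hσxF
              · exact hbF hσxF
            · push_neg at hz
              exact Or.inl (Equiv.swap_apply_of_ne_of_ne hz.1 hz.2)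
          refine ⟨hdisj.commute, fun h => ?_⟩
          have : Equiv.swap a b a = Equiv.swap x (σ x) a := by rw [h]
          rw [Equiv.swap_apply_left,
            Equiv.swap_apply_of_ne_of_ne (fun h => haF (by rw [h]; exact hxF))
              (fun h => haF (by rw [h]; exact hσxF))] at this
          exact hab this.symm
        set τ := Equiv.swap x (σ x) * σ with hτ
        have hτF : ∀ a ∉ F, τ a = a := by
          intro a ha
          have h1 : σ a = a := hσ' a ha
          simp only [hτ, Equiv.Perm.mul_apply, h1]
          exact Equiv.swap_apply_of_ne_of_ne (fun h => ha (h ▸ hxF))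
            (fun h => ha (h ▸ hσxF))
        have hlt : τ.support.card < n := hn ▸ Equiv.Perm.card_support_swap_mul hx'
        have hτmem : τ ∈ Subgroup.closure {t : Equiv.Perm α | t.IsSwap ∧
            ∀ s ∈ youngSubgroup f, s.IsSwap → s * t = t * s ∧ s ≠ t} :=
          ih _ hlt τ hτF rfl
        have : σ = Equiv.swap x (σ x) * τ := by
          rw [hτ, ← mul_assoc, Equiv.swap_mul_self, one_mul]
        rw [this]
        exact Subgroup.mul_mem _ (Subgroup.subset_closure hswap_gen) hτmem
    exact fun σ hσ => key _ σ hσ rfl
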